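/- arXiv:0802.0578 — 2 statements merged into one kernel-verified Lean document; each statement's English description precedes it below -/
import Mathlib

section
/- Let N ≥ 3, and suppose for bounded measurable k on S^{N−1}, σ ∈ ℝ with 2σ + N − 2 < 2 and 2σ + N − 2 > 0, ψ : S^{N−1} → ℝ continuous positive, and φ continuous on ℝ^N\{0} with limits c_∞ := lim_{|x|→∞} φ(x)/(|x|^{−σ−N+2} ψ(x/|x|)) ∈ (0,∞) and φ(x) ≤ C|x|^σ/(1+|x|^{2σ+N−2}). Then with φ_μ(x) = μ^{−(N−2)/2} φ(x/μ), for any a ≠ 0: ∫ k((x−a)/|x−a|)/|x−a|² φ_μ(x)² dx = μ^{2σ+N−2} [ c_∞² ∫ k(x/|x|) ψ((x+a)/|x+a|)² / (|x|² |x+a|^{2(σ+N−2)}) dx + o(1) ] as μ → 0⁺. -/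
open MeasureTheory Filter
open scoped Topology

section Aux
open Set Metric

lemma integrable_subtype_comap_iff' {α : Type*} [MeasurableSpace α] {μ : Measure α}
    {s : Set α} (hs : MeasurableSet s) (f : α → ℝ) :
    Integrable (fun x : s => f x) (μ.comap Subtype.val) ↔ IntegrableOn f s μ := by
  rw [IntegrableOn, ← map_comap_subtype_coe hs]
  exact ((MeasurableEmbedding.subtype_coe hs).integrable_map_iff).symm

lemma integrable_of_radial' {N : ℕ} (hN : N ≠ 0)
    (f : ℝ → ℝ) (hf : Measurable f)
    (h1 : IntegrableOn (fun r => f r * r ^ (N - 1)) (Set.Ioi (0:ℝ))) :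
    Integrable (fun x : EuclideanSpace ℝ (Fin N) => f ‖x‖) := by
  set E := EuclideanSpace ℝ (Fin N)
  haveI : Nonempty (Fin N) := ⟨⟨0, Nat.pos_of_ne_zero hN⟩⟩
  haveI : Nontrivial E := inferInstance
  have hdim : Module.finrank ℝ E = N := finrank_euclideanSpace_fin
  have key : Integrable (fun p : sphere (0:E) 1 × Set.Ioi (0:ℝ) => f p.2)
      ((volume : Measure E).toSphere.prod (.volumeIoiPow (Module.finrank ℝ E - 1))) := by
    have hint : Integrable (fun r : Set.Ioi (0:ℝ) => f r)
        (Measure.volumeIoiPow (Module.finrank ℝ E - 1)) := by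
      rw [Measure.volumeIoiPow, integrable_withDensity_iff]
      · have := (integrable_subtype_comap_iff' (μ := volume) measurableSet_Ioi
            (fun r => f r * r ^ (Module.finrank ℝ E - 1))).2 (by rw [hdim]; exact h1)
        apply this.congr
        filter_upwards with r
        rw [ENNReal.toReal_ofReal (pow_nonneg r.2.out.le _)]
      · exact ((measurable_subtype_coe.pow_const _)).ennreal_ofReal
      · filter_upwards with r using ENNReal.ofReal_lt_top
    rw [integrable_prod_iff']
    · constructor
      · filter_upwards with r using integrable_const _
      · apply hint.norm.const_mul _ |>.congr
        filter_upwards with r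
        rw [integral_const, smul_eq_mul, mul_comm]
    · exact ((hf.comp measurable_subtype_coe).comp measurable_snd).aestronglyMeasurable
  have h2 : Integrable (fun x : ({0}ᶜ : Set E) => f ‖(x:E)‖)
      ((volume : Measure E).comap Subtype.val) := by
    have := ((volume : Measure E).measurePreserving_homeomorphUnitSphereProd).integrable_comp_emb
      (Homeomorph.measurableEmbedding _) (g := fun p : sphere (0:E) 1 × Set.Ioi (0:ℝ) => f p.2)
    have heq : (fun p : sphere (0:E) 1 × Set.Ioi (0:ℝ) => f p.2) ∘ (homeomorphUnitSphereProd E)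
        = fun x : ({0}ᶜ : Set E) => f ‖(x:E)‖ := by
      funext x; simp
    rw [heq] at this
    rw [this]
    exact key
  have h3 := (integrable_subtype_comap_iff' (μ := volume)
    (measurableSet_singleton (0:E)).compl (fun x => f ‖x‖)).1 h2
  rwa [IntegrableOn, Measure.restrict_congr_set (ae_eq_univ.2 (by simp)),
    Measure.restrict_univ] at h3

lemma integrableOn_norm_rpow_ball' {N : ℕ} (hN : N ≠ 0) (p : ℝ) (hp : p < N) (R : ℝ) :
    IntegrableOn (fun x : EuclideanSpace ℝ (Fin N) => ‖x‖ ^ (-p)) (ball 0 R) := by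
  rcases le_or_gt R 0 with hR | hR
  · rw [ball_eq_empty.2 hR]; exact integrableOn_empty
  set f : ℝ → ℝ := Set.indicator (Set.Iio R) (fun r => r ^ (-p)) with hf_def
  have hfm : Measurable f :=
    Measurable.indicator (by fun_prop) measurableSet_Iio
  have h1 : IntegrableOn (fun r => f r * r ^ (N - 1)) (Set.Ioi (0:ℝ)) := by
    have heq : (fun r => f r * r ^ (N - 1))
        = Set.indicator (Set.Iio R) (fun r => r ^ (-p) * r ^ (N - 1)) := by
      funext r
      by_cases h : r ∈ Set.Iio R <;> simp [hf_def, h]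
    rw [heq, IntegrableOn, integrable_indicator_iff measurableSet_Iio,
      IntegrableOn, Measure.restrict_restrict measurableSet_Iio, Set.Iio_inter_Ioi]
    have hio : IntegrableOn (fun r : ℝ => r ^ ((N:ℝ) - 1 - p)) (Set.Ioc 0 R) := by
      have := intervalIntegral.intervalIntegrable_rpow' (a := 0) (b := R)
        (r := (N:ℝ) - 1 - p) (by linarith)
      rwa [intervalIntegrable_iff, uIoc_of_le hR.le] at this
    refine (hio.mono_set Set.Ioo_subset_Ioc_self).congr_fun (fun r hr => ?_) measurableSet_Ioo
    have hr0 : (0:ℝ) < r := hr.1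
    rw [← Real.rpow_natCast r (N-1), ← Real.rpow_add hr0]
    congr 1
    have : ((N - 1 : ℕ) : ℝ) = (N:ℝ) - 1 := by
      have := Nat.one_le_iff_ne_zero.2 hN
      push_cast [Nat.cast_sub this]; ring
    rw [this]; ring
  have hint := integrable_of_radial' hN f hfm h1
  refine (hint.integrableOn.congr_fun (fun x hx => ?_) measurableSet_ball)
  have : ‖x‖ < R := by simpa [dist_eq_norm] using hx
  simp [hf_def, Set.indicator_of_mem (Set.mem_Iio.2 this)]

lemma integrableOn_norm_rpow_compl' {N : ℕ} (p : ℝ) (hp : (N:ℝ) < p) {R : ℝ} (hR : 1 ≤ R) :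
    IntegrableOn (fun x : EuclideanSpace ℝ (Fin N) => ‖x‖ ^ (-p))
      ((ball (0 : EuclideanSpace ℝ (Fin N)) R)ᶜ) := by
  have hint : Integrable (fun x : EuclideanSpace ℝ (Fin N) => (1 + ‖x‖) ^ (-p)) := by
    apply integrable_one_add_norm
    rwa [finrank_euclideanSpace_fin]
  refine ((hint.const_mul ((2:ℝ)^p)).integrableOn).mono'
    (Measurable.aestronglyMeasurable (by fun_prop)) ?_
  filter_upwards [ae_restrict_mem measurableSet_ball.compl] with x hx
  have hx1 : 1 ≤ ‖x‖ := by
    have : ¬ dist x 0 < R := hx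
    rw [dist_eq_norm, sub_zero] at this
    linarith [not_lt.1 this]
  have hx0 : (0:ℝ) < ‖x‖ := by linarith
  rw [Real.norm_eq_abs, abs_of_nonneg (Real.rpow_nonneg (norm_nonneg x) _)]
  have h2 : (1 + ‖x‖) ^ (-p) ≥ (2 * ‖x‖) ^ (-p) :=
    Real.rpow_le_rpow_of_nonpos (by linarith) (by linarith) (by linarith)
  have h3 : (2 * ‖x‖) ^ (-p) = (2:ℝ)^(-p) * ‖x‖ ^ (-p) :=
    Real.mul_rpow (by norm_num) (norm_nonneg x)
  have h4 : (2:ℝ)^p * (2:ℝ)^(-p) = 1 := by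
    rw [← Real.rpow_add (by norm_num)]; simp
  calc ‖x‖ ^ (-p) = (2:ℝ)^p * ((2:ℝ)^(-p) * ‖x‖ ^ (-p)) := by
        rw [← mul_assoc, h4, one_mul]
    _ ≤ (2:ℝ)^p * (1 + ‖x‖) ^ (-p) := by
        rw [← h3]
        apply mul_le_mul_of_nonneg_left (by linarith) (Real.rpow_nonneg (by norm_num) _)

lemma integrable_two_singular' {N : ℕ} (hN : N ≠ 0)
    (a : EuclideanSpace ℝ (Fin N)) (ha : a ≠ 0) (p q : ℝ)
    (hp0 : 0 ≤ p) (hpN : p < N) (hq0 : 0 ≤ q) (hqN : q < N) (hpq : (N:ℝ) < p + q) :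
    Integrable (fun x : EuclideanSpace ℝ (Fin N) => ‖x‖ ^ (-p) * ‖x + a‖ ^ (-q)) := by
  have hanorm : (0:ℝ) < ‖a‖ := norm_pos_iff.2 ha
  set r : ℝ := ‖a‖ / 2 with hr_def
  have hr : 0 < r := by rw [hr_def]; linarith
  set R : ℝ := max 1 (2 * ‖a‖) with hR_def
  have hR1 : 1 ≤ R := le_max_left _ _
  have hRa : 2 * ‖a‖ ≤ R := le_max_right _ _
  have hmeas : Measurable (fun x : EuclideanSpace ℝ (Fin N) => ‖x‖ ^ (-p) * ‖x + a‖ ^ (-q)) := by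
    fun_prop
  set S₂ : Set (EuclideanSpace ℝ (Fin N)) := ball (-a) r
  set S₃ : Set (EuclideanSpace ℝ (Fin N)) := (ball (0:EuclideanSpace ℝ (Fin N)) R)ᶜ
  set S₄ : Set (EuclideanSpace ℝ (Fin N)) :=
    ball (0:EuclideanSpace ℝ (Fin N)) (R + 1) \ ball (-a) r
  have h2 : IntegrableOn
      (fun x : EuclideanSpace ℝ (Fin N) => ‖x‖ ^ (-p) * ‖x + a‖ ^ (-q)) S₂ := by
    have hshift : IntegrableOn
        (fun x : EuclideanSpace ℝ (Fin N) => ‖x + a‖ ^ (-q)) (ball (-a) r) := by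
      have hb := integrableOn_norm_rpow_ball' hN q hqN r
      have hb2 : Integrable
          (fun x : EuclideanSpace ℝ (Fin N) =>
            Set.indicator (ball (0:EuclideanSpace ℝ (Fin N)) r) (fun y => ‖y‖ ^ (-q)) (x + a)) :=
        ((integrable_indicator_iff measurableSet_ball).2 hb).comp_add_right a
      have heq : (fun x : EuclideanSpace ℝ (Fin N) =>
            Set.indicator (ball (0:EuclideanSpace ℝ (Fin N)) r) (fun y => ‖y‖ ^ (-q)) (x + a))
          = Set.indicator (ball (-a) r)
              (fun x : EuclideanSpace ℝ (Fin N) => ‖x + a‖ ^ (-q)) := by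
        funext x
        by_cases hx : x ∈ ball (-a : EuclideanSpace ℝ (Fin N)) r
        · have : x + a ∈ ball (0:EuclideanSpace ℝ (Fin N)) r := by
            rw [mem_ball, dist_eq_norm] at hx ⊢
            simpa [sub_neg_eq_add] using hx
          rw [Set.indicator_of_mem this, Set.indicator_of_mem hx]
        · have : x + a ∉ ball (0:EuclideanSpace ℝ (Fin N)) r := by
            rw [mem_ball, dist_eq_norm] at hx ⊢
            simpa [sub_neg_eq_add] using hx
          rw [Set.indicator_of_notMem this, Set.indicator_of_notMem hx]
      rw [heq] at hb2
      exact (integrable_indicator_iff measurableSet_ball).1 hb2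
    refine ((hshift.const_mul (r ^ (-p))).mono' hmeas.aestronglyMeasurable.restrict ?_)
    filter_upwards [ae_restrict_mem measurableSet_ball] with x hx
    have hxa : ‖x + a‖ < r := by rw [mem_ball, dist_eq_norm, sub_neg_eq_add] at hx; exact hx
    have hxn : r ≤ ‖x‖ := by
      have h1 : ‖a‖ ≤ ‖x + a‖ + ‖x‖ := by
        have := norm_sub_le (x + a) x
        simpa [add_sub_cancel_left] using this
      rw [hr_def] at hxa ⊢
      linarith
    rw [Real.norm_eq_abs, abs_of_nonneg (by positivity)]
    have h1 : ‖x‖ ^ (-p) ≤ r ^ (-p) :=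
      Real.rpow_le_rpow_of_nonpos hr hxn (by linarith)
    have h2 : (0:ℝ) ≤ ‖x + a‖ ^ (-q) := Real.rpow_nonneg (norm_nonneg _) _
    calc ‖x‖ ^ (-p) * ‖x + a‖ ^ (-q) ≤ r ^ (-p) * ‖x + a‖ ^ (-q) :=
          mul_le_mul_of_nonneg_right h1 h2
      _ = r ^ (-p) * ‖x + a‖ ^ (-q) := rfl
  have h3 : IntegrableOn
      (fun x : EuclideanSpace ℝ (Fin N) => ‖x‖ ^ (-p) * ‖x + a‖ ^ (-q)) S₃ := by
    have hb := integrableOn_norm_rpow_compl' (N := N) (p + q) hpq hR1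
    refine ((hb.const_mul ((2:ℝ) ^ q)).mono' hmeas.aestronglyMeasurable.restrict ?_)
    filter_upwards [ae_restrict_mem measurableSet_ball.compl] with x hx
    have hxR : R ≤ ‖x‖ := by
      have : ¬ dist x 0 < R := hx
      rw [dist_eq_norm, sub_zero] at this
      linarith [not_lt.1 this]
    have hx0 : (0:ℝ) < ‖x‖ := by linarith
    have hxa : ‖x‖ / 2 ≤ ‖x + a‖ := by
      have h1 : ‖x‖ - ‖a‖ ≤ ‖x + a‖ := by
        have := norm_sub_le (x + a) a
        rw [add_sub_cancel_right] at this
        linarith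
      linarith [hRa.trans hxR]
    have hhalf : (0:ℝ) < ‖x‖ / 2 := by positivity
    rw [Real.norm_eq_abs, abs_of_nonneg (by positivity)]
    have h1 : ‖x + a‖ ^ (-q) ≤ (‖x‖ / 2) ^ (-q) :=
      Real.rpow_le_rpow_of_nonpos hhalf hxa (by linarith)
    have h2 : (‖x‖ / 2) ^ (-q) = ‖x‖ ^ (-q) / (2:ℝ) ^ (-q) :=
      Real.div_rpow (norm_nonneg x) (by norm_num : (0:ℝ) ≤ 2) (-q)
    have h3 : ‖x‖ ^ (-q) / (2:ℝ) ^ (-q) = (2:ℝ) ^ q * ‖x‖ ^ (-q) := by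
      rw [Real.rpow_neg (by norm_num : (0:ℝ) ≤ 2), div_eq_mul_inv, inv_inv, mul_comm]
    have h4 : ‖x‖ ^ (-p) * ‖x‖ ^ (-q) = ‖x‖ ^ (-(p + q)) := by
      rw [← Real.rpow_add hx0]; ring_nf
    calc ‖x‖ ^ (-p) * ‖x + a‖ ^ (-q)
        ≤ ‖x‖ ^ (-p) * ((2:ℝ) ^ q * ‖x‖ ^ (-q)) := by
          rw [← h3, ← h2]
          exact mul_le_mul_of_nonneg_left h1 (Real.rpow_nonneg (norm_nonneg _) _)
      _ = (2:ℝ) ^ q * ‖x‖ ^ (-(p + q)) := by rw [← h4]; ring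
  have h4 : IntegrableOn
      (fun x : EuclideanSpace ℝ (Fin N) => ‖x‖ ^ (-p) * ‖x + a‖ ^ (-q)) S₄ := by
    have hb := (integrableOn_norm_rpow_ball' hN p hpN (R + 1)).mono_set
      (diff_subset : S₄ ⊆ ball (0:EuclideanSpace ℝ (Fin N)) (R+1))
    refine ((hb.const_mul (r ^ (-q))).mono' hmeas.aestronglyMeasurable.restrict ?_)
    filter_upwards [ae_restrict_mem (measurableSet_ball.diff measurableSet_ball)] with x hx
    have hxa : r ≤ ‖x + a‖ := by
      have : ¬ dist x (-a) < r := hx.2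
      rw [dist_eq_norm, sub_neg_eq_add] at this
      linarith [not_lt.1 this]
    rw [Real.norm_eq_abs, abs_of_nonneg (by positivity)]
    have h1 : ‖x + a‖ ^ (-q) ≤ r ^ (-q) :=
      Real.rpow_le_rpow_of_nonpos hr hxa (by linarith)
    calc ‖x‖ ^ (-p) * ‖x + a‖ ^ (-q) ≤ ‖x‖ ^ (-p) * r ^ (-q) :=
          mul_le_mul_of_nonneg_left h1 (Real.rpow_nonneg (norm_nonneg _) _)
      _ = r ^ (-q) * ‖x‖ ^ (-p) := by ring
  have hcover : (Set.univ : Set (EuclideanSpace ℝ (Fin N))) ⊆ S₂ ∪ S₃ ∪ S₄ := by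
    intro x _
    by_cases hx2 : x ∈ S₂
    · exact Or.inl (Or.inl hx2)
    by_cases hx3 : x ∈ S₃
    · exact Or.inl (Or.inr hx3)
    refine Or.inr ⟨?_, hx2⟩
    have : ‖x‖ < R := by
      by_contra h
      exact hx3 (by rw [Set.mem_compl_iff, mem_ball, dist_eq_norm, sub_zero]; linarith [not_lt.1 h])
    rw [mem_ball, dist_eq_norm, sub_zero]
    linarith
  rw [← integrableOn_univ]
  exact (((h2.union h3).union h4).mono_set hcover)

end Aux

set_option maxHeartbeats 1000000 in
theorem stmt9 {N : ℕ} (hN : 3 ≤ N) (σ : ℝ)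
    (hσ1 : 0 < 2 * σ + (N : ℝ) - 2) (hσ2 : 2 * σ + (N : ℝ) - 2 < 2)
    (a : EuclideanSpace ℝ (Fin N)) (ha : a ≠ 0)
    (k ψ φ : EuclideanSpace ℝ (Fin N) → ℝ)
    (M : ℝ) (hk : ∀ x, |k x| ≤ M) (hkm : Measurable k)
    (hψ : Continuous ψ) (hψpos : ∀ x : EuclideanSpace ℝ (Fin N), ‖x‖ = 1 → 0 < ψ x)
    (hφcont : ContinuousOn φ {(0 : EuclideanSpace ℝ (Fin N))}ᶜ)
    (C : ℝ) (hC : 0 < C)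
    (hbound : ∀ x : EuclideanSpace ℝ (Fin N), x ≠ 0 →
      |φ x| ≤ C * (‖x‖ ^ σ / (1 + ‖x‖ ^ (2 * σ + (N : ℝ) - 2))))
    (cinf : ℝ) (hcinf : 0 < cinf)
    (hlim : Tendsto
      (fun x : EuclideanSpace ℝ (Fin N) =>
        φ x / (‖x‖ ^ (-σ - (N : ℝ) + 2) * ψ (‖x‖⁻¹ • x)))
      (Filter.comap norm Filter.atTop) (𝓝 cinf)) :
    ∃ o : ℝ → ℝ, Tendsto o (𝓝[>] 0) (𝓝 0) ∧ ∀ μ : ℝ, 0 < μ →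
      (∫ x, k (‖x - a‖⁻¹ • (x - a)) / ‖x - a‖ ^ 2
          * (μ ^ (-((N : ℝ) - 2) / 2) * φ (μ⁻¹ • x)) ^ 2)
        = μ ^ (2 * σ + (N : ℝ) - 2) *
          (cinf ^ 2 *
            (∫ x, k (‖x‖⁻¹ • x) * (ψ (‖x + a‖⁻¹ • (x + a))) ^ 2
              / (‖x‖ ^ 2 * ‖x + a‖ ^ (2 * (σ + (N : ℝ) - 2))))
            + o μ) := by
  have hN0 : N ≠ 0 := by omega
  have hN3 : (3:ℝ) ≤ (N:ℝ) := by exact_mod_cast hN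
  haveI : Nonempty (Fin N) := ⟨⟨0, Nat.pos_of_ne_zero hN0⟩⟩
  haveI : Nontrivial (EuclideanSpace ℝ (Fin N)) := inferInstance
  haveI : NullSingletonClass (volume : Measure (EuclideanSpace ℝ (Fin N))) := inferInstance
  set t : ℝ := σ + (N:ℝ) - 2 with ht_def
  have h2t_pos : 0 < 2 * t := by rw [ht_def]; linarith
  have h2t_lt : 2 * t < (N:ℝ) := by rw [ht_def]; linarith
  have hMnn : 0 ≤ M := le_trans (abs_nonneg _) (hk 0)
  -- measurability of φ
  have hφm : Measurable φ := by
    refine measurable_of_restrict_of_restrict_compl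
      (measurableSet_singleton (0 : EuclideanSpace ℝ (Fin N))) ?_ ?_
    · exact Subsingleton.measurable
    · exact (continuousOn_iff_continuous_restrict.1 hφcont).measurable
  -- the rescaled family
  set F : ℝ → EuclideanSpace ℝ (Fin N) → ℝ := fun μ x =>
    k (‖x‖⁻¹ • x) / ‖x‖ ^ 2 * ‖x + a‖ ^ (-(2 * t)) *
      (φ (μ⁻¹ • (x + a)) * ‖μ⁻¹ • (x + a)‖ ^ t) ^ 2 with hF_def
  set g : EuclideanSpace ℝ (Fin N) → ℝ := fun x =>
    k (‖x‖⁻¹ • x) * (ψ (‖x + a‖⁻¹ • (x + a))) ^ 2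
      / (‖x‖ ^ 2 * ‖x + a‖ ^ (2 * t)) with hg_def
  -- basic bound on φ
  have hφb : ∀ y : EuclideanSpace ℝ (Fin N), y ≠ 0 → |φ y| * ‖y‖ ^ t ≤ C := by
    intro y hy
    have hy0 : (0:ℝ) < ‖y‖ := norm_pos_iff.2 hy
    have hs0 : (0:ℝ) < ‖y‖ ^ (2 * σ + (N:ℝ) - 2) := Real.rpow_pos_of_pos hy0 _
    have h1 : |φ y| ≤ C * (‖y‖ ^ σ / ‖y‖ ^ (2 * σ + (N:ℝ) - 2)) := by
      refine (hbound y hy).trans ?_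
      have : ‖y‖ ^ σ / (1 + ‖y‖ ^ (2 * σ + (N:ℝ) - 2))
          ≤ ‖y‖ ^ σ / ‖y‖ ^ (2 * σ + (N:ℝ) - 2) := by
        apply div_le_div_of_nonneg_left (Real.rpow_nonneg hy0.le _) hs0 (by linarith)
      exact mul_le_mul_of_nonneg_left this hC.le
    have h2 : ‖y‖ ^ σ / ‖y‖ ^ (2 * σ + (N:ℝ) - 2) = ‖y‖ ^ (-t) := by
      rw [← Real.rpow_sub hy0]
      congr 1
      rw [ht_def]; ring
    rw [h2] at h1
    have h3 : |φ y| * ‖y‖ ^ t ≤ (C * ‖y‖ ^ (-t)) * ‖y‖ ^ t :=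
      mul_le_mul_of_nonneg_right h1 (Real.rpow_nonneg hy0.le _)
    refine h3.trans_eq ?_
    rw [mul_assoc, ← Real.rpow_add hy0]
    simp
  -- the a.e. full set
  have hae : ∀ᵐ x : EuclideanSpace ℝ (Fin N) ∂volume, x ≠ 0 ∧ x ≠ -a := by
    have h0 := measure_eq_zero_iff_ae_notMem.1
      (measure_singleton (0 : EuclideanSpace ℝ (Fin N)) (μ := volume))
    have h1 := measure_eq_zero_iff_ae_notMem.1
      (measure_singleton (-a : EuclideanSpace ℝ (Fin N)) (μ := volume))
    filter_upwards [h0, h1] with x hx0 hx1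
    exact ⟨by simpa using hx0, by simpa using hx1⟩
  -- key pointwise identity
  have key : ∀ μ : ℝ, 0 < μ → ∀ x : EuclideanSpace ℝ (Fin N), x ≠ 0 → x ≠ -a →
      k (‖x‖⁻¹ • x) / ‖x‖ ^ 2 * (μ ^ (-((N : ℝ) - 2) / 2) * φ (μ⁻¹ • (x + a))) ^ 2
        = μ ^ (2 * σ + (N:ℝ) - 2) * F μ x := by
    intro μ hμ x hx0 hx1
    have hxa : x + a ≠ 0 := by
      intro h
      exact hx1 (by rw [← neg_neg a] at h ⊢; exact eq_neg_of_add_eq_zero_left h)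
    have ht0 : (0:ℝ) < ‖x + a‖ := norm_pos_iff.2 hxa
    have hn : ‖μ⁻¹ • (x + a)‖ = μ⁻¹ * ‖x + a‖ := by
      rw [norm_smul, Real.norm_eq_abs, abs_of_pos (inv_pos.2 hμ)]
    have e1 : ∀ (b : ℝ), 0 ≤ b → ∀ (c : ℝ), (b ^ c) ^ (2:ℕ) = b ^ (c * 2) := by
      intro b hb c
      rw [← Real.rpow_natCast (b ^ c) 2, ← Real.rpow_mul hb]
      norm_num
    have hscal : (μ ^ (-((N : ℝ) - 2) / 2)) ^ (2:ℕ)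
        = μ ^ (2 * σ + (N:ℝ) - 2) * ‖x + a‖ ^ (-(2 * t)) *
            (‖μ⁻¹ • (x + a)‖ ^ t) ^ (2:ℕ) := by
      rw [hn, e1 μ hμ.le, e1 (μ⁻¹ * ‖x + a‖) (by positivity)]
      rw [Real.mul_rpow (inv_nonneg.2 hμ.le) ht0.le, Real.inv_rpow hμ.le,
        ← Real.rpow_neg hμ.le]
      have : μ ^ (2 * σ + (N:ℝ) - 2) * ‖x + a‖ ^ (-(2 * t)) *
          (μ ^ (-(t * 2)) * ‖x + a‖ ^ (t * 2))
          = (μ ^ (2 * σ + (N:ℝ) - 2) * μ ^ (-(t * 2))) *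
            (‖x + a‖ ^ (-(2 * t)) * ‖x + a‖ ^ (t * 2)) := by ring
      rw [this, ← Real.rpow_add hμ, ← Real.rpow_add ht0]
      have h1 : -(2 * t) + t * 2 = 0 := by ring
      rw [h1, Real.rpow_zero, mul_one]
      congr 1
      rw [ht_def]; ring
    rw [hF_def]
    simp only
    rw [mul_pow, mul_pow, hscal]
    ring
  -- measurability of F μ
  have hFm : ∀ μ : ℝ, AEStronglyMeasurable (F μ)
      (volume : Measure (EuclideanSpace ℝ (Fin N))) := by
    intro μ
    apply Measurable.aestronglyMeasurable
    apply Measurable.mul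
    · apply Measurable.mul
      · exact (hkm.comp (by fun_prop)).div (by fun_prop)
      · fun_prop
    · exact ((hφm.comp (by fun_prop)).mul (by fun_prop)).pow_const 2
  -- the dominating function
  set bound : EuclideanSpace ℝ (Fin N) → ℝ := fun x =>
    M * C ^ 2 * (‖x‖ ^ (-(2:ℝ)) * ‖x + a‖ ^ (-(2 * t))) with hbound_def
  have hbound_int : Integrable bound := by
    apply Integrable.const_mul
    exact integrable_two_singular' hN0 a ha 2 (2 * t) (by norm_num) (by linarith)
      h2t_pos.le h2t_lt (by linarith)
  have hrpow2 : ∀ v : EuclideanSpace ℝ (Fin N), ‖v‖ ^ (-(2:ℝ)) = (‖v‖ ^ (2:ℕ))⁻¹ := by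
    intro v
    rw [← Real.rpow_natCast ‖v‖ 2, ← Real.rpow_neg (norm_nonneg v)]
    norm_num
  -- the a.e. bound
  have h_bound : ∀ᶠ μ in 𝓝[>] (0:ℝ),
      ∀ᵐ x : EuclideanSpace ℝ (Fin N) ∂volume, ‖F μ x‖ ≤ bound x := by
    filter_upwards [self_mem_nhdsWithin] with μ hμ'
    have hμ : (0:ℝ) < μ := hμ'
    filter_upwards [hae] with x hx
    obtain ⟨hx0, hx1⟩ := hx
    have hxa : x + a ≠ 0 := by
      intro h
      exact hx1 (by rw [← neg_neg a] at h ⊢; exact eq_neg_of_add_eq_zero_left h)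
    have hy : μ⁻¹ • (x + a) ≠ 0 := smul_ne_zero (inv_ne_zero hμ.ne') hxa
    have hxpos : (0:ℝ) < ‖x‖ := norm_pos_iff.2 hx0
    have h5 : (φ (μ⁻¹ • (x + a)) * ‖μ⁻¹ • (x + a)‖ ^ t) ^ 2 ≤ C ^ 2 := by
      have habs : |φ (μ⁻¹ • (x + a)) * ‖μ⁻¹ • (x + a)‖ ^ t| ≤ C := by
        rw [abs_mul, abs_of_nonneg (Real.rpow_nonneg (norm_nonneg _) _)]
        exact hφb _ hy
      calc (φ (μ⁻¹ • (x + a)) * ‖μ⁻¹ • (x + a)‖ ^ t) ^ 2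
          = |φ (μ⁻¹ • (x + a)) * ‖μ⁻¹ • (x + a)‖ ^ t| ^ 2 := (sq_abs _).symm
        _ ≤ C ^ 2 := pow_le_pow_left₀ (abs_nonneg _) habs 2
    have habsF : ‖F μ x‖ = |k (‖x‖⁻¹ • x)| / ‖x‖ ^ 2 * ‖x + a‖ ^ (-(2 * t)) *
        (φ (μ⁻¹ • (x + a)) * ‖μ⁻¹ • (x + a)‖ ^ t) ^ 2 := by
      simp only [hF_def]
      rw [Real.norm_eq_abs, abs_mul, abs_mul,
        abs_of_nonneg (Real.rpow_nonneg (norm_nonneg (x + a)) (-(2*t))),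
        abs_of_nonneg (sq_nonneg (φ (μ⁻¹ • (x + a)) * ‖μ⁻¹ • (x + a)‖ ^ t)),
        abs_div, abs_of_nonneg (sq_nonneg (‖x‖))]
    rw [habsF, hbound_def]
    simp only
    have hb1 : |k (‖x‖⁻¹ • x)| / ‖x‖ ^ 2 ≤ M / ‖x‖ ^ 2 := by
      apply div_le_div_of_nonneg_right (hk _) (by positivity)
    calc |k (‖x‖⁻¹ • x)| / ‖x‖ ^ 2 * ‖x + a‖ ^ (-(2 * t)) *
        (φ (μ⁻¹ • (x + a)) * ‖μ⁻¹ • (x + a)‖ ^ t) ^ 2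
        ≤ M / ‖x‖ ^ 2 * ‖x + a‖ ^ (-(2 * t)) * C ^ 2 := by
          apply mul_le_mul
          · exact mul_le_mul_of_nonneg_right hb1 (Real.rpow_nonneg (norm_nonneg _) _)
          · exact h5
          · exact sq_nonneg _
          · positivity
      _ = M * C ^ 2 * (‖x‖ ^ (-(2:ℝ)) * ‖x + a‖ ^ (-(2 * t))) := by
          rw [hrpow2 x, div_eq_mul_inv]
          ring
  -- pointwise limit
  have h_lim : ∀ᵐ x : EuclideanSpace ℝ (Fin N) ∂volume,
      Tendsto (fun μ => F μ x) (𝓝[>] (0:ℝ)) (𝓝 (cinf ^ 2 * g x)) := by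
    filter_upwards [hae] with x hx
    obtain ⟨hx0, hx1⟩ := hx
    have hxa : x + a ≠ 0 := by
      intro h
      exact hx1 (by rw [← neg_neg a] at h ⊢; exact eq_neg_of_add_eq_zero_left h)
    have ht0 : (0:ℝ) < ‖x + a‖ := norm_pos_iff.2 hxa
    have hxpos : (0:ℝ) < ‖x‖ := norm_pos_iff.2 hx0
    set w : EuclideanSpace ℝ (Fin N) := ‖x + a‖⁻¹ • (x + a) with hw_def
    have hwnorm : ‖w‖ = 1 := by
      rw [hw_def, norm_smul, Real.norm_eq_abs, abs_of_pos (inv_pos.2 ht0),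
        inv_mul_cancel₀ ht0.ne']
    have hψw : 0 < ψ w := hψpos w hwnorm
    -- the path tends to infinity in norm
    have htend1 : Tendsto (fun μ : ℝ => μ⁻¹ • (x + a)) (𝓝[>] (0:ℝ))
        (Filter.comap norm Filter.atTop) := by
      rw [tendsto_comap_iff]
      have heq : (fun μ : ℝ => ‖μ⁻¹ • (x + a)‖) =ᶠ[𝓝[>] (0:ℝ)]
          fun μ => ‖x + a‖ * μ⁻¹ := by
        filter_upwards [self_mem_nhdsWithin] with μ hμ
        rw [norm_smul, Real.norm_eq_abs, abs_of_pos (inv_pos.2 hμ), mul_comm]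
      refine Tendsto.congr' heq.symm ?_
      exact tendsto_inv_nhdsGT_zero.const_mul_atTop ht0
    have htend2 := hlim.comp htend1
    -- rewrite the composed function
    have heq2 : (fun μ : ℝ =>
        φ (μ⁻¹ • (x + a)) / (‖μ⁻¹ • (x + a)‖ ^ (-σ - (N:ℝ) + 2) *
          ψ (‖μ⁻¹ • (x + a)‖⁻¹ • μ⁻¹ • (x + a)))) =ᶠ[𝓝[>] (0:ℝ)]
        (fun μ : ℝ => φ (μ⁻¹ • (x + a)) * ‖μ⁻¹ • (x + a)‖ ^ t / ψ w) := by
      filter_upwards [self_mem_nhdsWithin] with μ hμ'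
      have hμ : (0:ℝ) < μ := hμ'
      have hn : ‖μ⁻¹ • (x + a)‖ = μ⁻¹ * ‖x + a‖ := by
        rw [norm_smul, Real.norm_eq_abs, abs_of_pos (inv_pos.2 hμ)]
      have hnpos : (0:ℝ) < ‖μ⁻¹ • (x + a)‖ := by
        rw [hn]; positivity
      have hunit : ‖μ⁻¹ • (x + a)‖⁻¹ • μ⁻¹ • (x + a) = w := by
        rw [hw_def, hn, smul_smul]
        congr 1
        field_simp
      rw [hunit]
      have hneg : ‖μ⁻¹ • (x + a)‖ ^ (-σ - (N:ℝ) + 2) = (‖μ⁻¹ • (x + a)‖ ^ t)⁻¹ := by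
        have : -σ - (N:ℝ) + 2 = -t := by rw [ht_def]; ring
        rw [this, Real.rpow_neg hnpos.le]
      rw [hneg]
      generalize φ (μ⁻¹ • (x + a)) = P
      generalize hQ : ‖μ⁻¹ • (x + a)‖ ^ t = Q at *
      have hQ0 : (0:ℝ) < Q := by rw [← hQ]; exact Real.rpow_pos_of_pos hnpos _
      rw [div_eq_div_iff (by positivity) (by positivity)]
      field_simp
    have htend3 : Tendsto
        (fun μ : ℝ => φ (μ⁻¹ • (x + a)) * ‖μ⁻¹ • (x + a)‖ ^ t / ψ w)
        (𝓝[>] (0:ℝ)) (𝓝 cinf) := htend2.congr' heq2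
    have htend4 : Tendsto
        (fun μ : ℝ => φ (μ⁻¹ • (x + a)) * ‖μ⁻¹ • (x + a)‖ ^ t)
        (𝓝[>] (0:ℝ)) (𝓝 (cinf * ψ w)) := by
      have := htend3.mul_const (ψ w)
      refine this.congr ?_
      intro μ
      exact div_mul_cancel₀ _ hψw.ne'
    have htendF : Tendsto (fun μ => F μ x) (𝓝[>] (0:ℝ))
        (𝓝 (k (‖x‖⁻¹ • x) / ‖x‖ ^ 2 * ‖x + a‖ ^ (-(2 * t)) * (cinf * ψ w) ^ 2)) := by
      simp only [hF_def]
      exact (htend4.pow 2).const_mul _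
    have hgoal : cinf ^ 2 * g x
        = k (‖x‖⁻¹ • x) / ‖x‖ ^ 2 * ‖x + a‖ ^ (-(2 * t)) * (cinf * ψ w) ^ 2 := by
      simp only [hg_def]
      have hB : (0:ℝ) < ‖x + a‖ ^ (2 * t) := Real.rpow_pos_of_pos ht0 _
      have hneg : ‖x + a‖ ^ (-(2 * t)) = (‖x + a‖ ^ (2 * t))⁻¹ :=
        Real.rpow_neg ht0.le _
      rw [hneg, div_eq_mul_inv, mul_inv]
      ring
    rw [hgoal]
    exact htendF
  -- dominated convergence
  have hDCT : Tendsto (fun μ => ∫ x, F μ x) (𝓝[>] (0:ℝ))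
      (𝓝 (∫ x, cinf ^ 2 * g x)) := by
    apply tendsto_integral_filter_of_dominated_convergence bound
      (Eventually.of_forall hFm) h_bound hbound_int
    filter_upwards [h_lim] with x hx
    exact hx
  rw [integral_const_mul] at hDCT
  -- the integral identity
  have heq : ∀ μ : ℝ, 0 < μ →
      (∫ x, k (‖x - a‖⁻¹ • (x - a)) / ‖x - a‖ ^ 2
          * (μ ^ (-((N : ℝ) - 2) / 2) * φ (μ⁻¹ • x)) ^ 2)
        = μ ^ (2 * σ + (N:ℝ) - 2) * ∫ x, F μ x := by
    intro μ hμ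
    have h1 : (∫ x : EuclideanSpace ℝ (Fin N), k (‖x - a‖⁻¹ • (x - a)) / ‖x - a‖ ^ 2
          * (μ ^ (-((N : ℝ) - 2) / 2) * φ (μ⁻¹ • x)) ^ 2)
        = ∫ x : EuclideanSpace ℝ (Fin N), k (‖x‖⁻¹ • x) / ‖x‖ ^ 2
          * (μ ^ (-((N : ℝ) - 2) / 2) * φ (μ⁻¹ • (x + a))) ^ 2 := by
      rw [← integral_add_right_eq_self (μ := volume)
        (fun x : EuclideanSpace ℝ (Fin N) => k (‖x - a‖⁻¹ • (x - a)) / ‖x - a‖ ^ 2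
          * (μ ^ (-((N : ℝ) - 2) / 2) * φ (μ⁻¹ • x)) ^ 2) a]
      congr 1
      funext x
      simp [add_sub_cancel_right]
    rw [h1]
    have h2 : (∫ x : EuclideanSpace ℝ (Fin N), k (‖x‖⁻¹ • x) / ‖x‖ ^ 2
          * (μ ^ (-((N : ℝ) - 2) / 2) * φ (μ⁻¹ • (x + a))) ^ 2)
        = ∫ x : EuclideanSpace ℝ (Fin N), μ ^ (2 * σ + (N:ℝ) - 2) * F μ x := by
      apply integral_congr_ae
      filter_upwards [hae] with x hx
      exact key μ hμ x hx.1 hx.2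
    rw [h2, integral_const_mul]
  refine ⟨fun μ => (∫ x, F μ x) - cinf ^ 2 * (∫ x, g x), ?_, ?_⟩
  · have := hDCT.sub_const (cinf ^ 2 * (∫ x, g x))
    simpa using this
  · intro μ hμ
    rw [heq μ hμ]
    have : (∫ x, g x) = ∫ x, k (‖x‖⁻¹ • x) * (ψ (‖x + a‖⁻¹ • (x + a))) ^ 2
        / (‖x‖ ^ 2 * ‖x + a‖ ^ (2 * (σ + (N : ℝ) - 2))) := by
      rw [hg_def]
    rw [← this]
    ring
end

section
/- Let H = {x ∈ ℝ^N : x·d ≥ 0} for a unit vector d, σ(x) = x − 2(x·d)d the reflection, and for measurable nonnegative u define the polarization u_d(x) = max{u(x), u(σ(x))} for x ∈ H and min{u(x), u(σ(x))} for x ∉ H. Then for nonnegative measurable u, ∫_{ℝ^N} (x·d)/|x|³ · (u_d(x)² − u(x)²) dx ≥ 0, provided both integrals are absolutely convergent. -/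
open MeasureTheory
open scoped RealInnerProductSpace

set_option maxHeartbeats 1000000 in
theorem stmt15 {N : ℕ} (hN : 3 ≤ N) (d : EuclideanSpace ℝ (Fin N)) (hd : ‖d‖ = 1)
    (u : EuclideanSpace ℝ (Fin N) → ℝ) (hmeas : Measurable u) (hpos : ∀ x, 0 ≤ u x)
    (pol : EuclideanSpace ℝ (Fin N) → ℝ)
    (hpol : ∀ x, pol x =
      if 0 ≤ ⟪x, d⟫ then max (u x) (u (x - (2 * ⟪x, d⟫) • d))
      else min (u x) (u (x - (2 * ⟪x, d⟫) • d)))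
    (h1 : Integrable (fun x => ⟪x, d⟫ / ‖x‖ ^ 3 * (pol x) ^ 2))
    (h2 : Integrable (fun x => ⟪x, d⟫ / ‖x‖ ^ 3 * (u x) ^ 2)) :
    0 ≤ ∫ x, ⟪x, d⟫ / ‖x‖ ^ 3 * ((pol x) ^ 2 - (u x) ^ 2) := by
  set σ : EuclideanSpace ℝ (Fin N) ≃ₗᵢ[ℝ] EuclideanSpace ℝ (Fin N) :=
    Submodule.reflection ((ℝ ∙ d)ᗮ) with hσdef
  have hdd : ⟪d, d⟫ = 1 := by
    rw [real_inner_self_eq_norm_sq, hd]; norm_num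
  have hσ : ∀ x, σ x = x - (2 * ⟪x, d⟫) • d := by
    intro x
    have hp : ((ℝ ∙ d).starProjection x : EuclideanSpace ℝ (Fin N)) = ⟪x, d⟫ • d := by
      rw [Submodule.starProjection_singleton]
      rw [hd, real_inner_comm d x]
      norm_num
    rw [hσdef, Submodule.reflection_apply, Submodule.starProjection_orthogonal_val, hp, two_smul]
    rw [two_mul, add_smul]
    abel
  have hσd : ∀ x, ⟪σ x, d⟫ = -⟪x, d⟫ := by
    intro x
    rw [hσ x, inner_sub_left, real_inner_smul_left, hdd]
    ring
  have hσσ : ∀ x, σ (σ x) = x := fun x => Submodule.reflection_reflection _ x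
  have hσn : ∀ x, ‖σ x‖ = ‖x‖ := fun x => σ.norm_map x
  set f : EuclideanSpace ℝ (Fin N) → ℝ :=
    fun x => ⟪x, d⟫ / ‖x‖ ^ 3 * ((pol x) ^ 2 - (u x) ^ 2) with hf
  have key : ∀ x, 0 ≤ f x + f (σ x) := by
    intro x
    have hpx : pol x = if 0 ≤ ⟪x, d⟫ then max (u x) (u (σ x)) else min (u x) (u (σ x)) := by
      rw [hpol x, ← hσ x]
    have hpσ : pol (σ x) =
        if 0 ≤ -⟪x, d⟫ then max (u (σ x)) (u x) else min (u (σ x)) (u x) := by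
      rw [hpol (σ x), ← hσ (σ x), hσσ x, hσd x]
    have e1 : f x + f (σ x) =
        ⟪x, d⟫ / ‖x‖ ^ 3 *
          (((pol x) ^ 2 - (pol (σ x)) ^ 2) - ((u x) ^ 2 - (u (σ x)) ^ 2)) := by
      simp only [hf, hσd x, hσn x]
      ring
    rw [e1]
    set a : ℝ := ⟪x, d⟫ with ha
    have hr0 : (0:ℝ) ≤ ‖x‖ ^ 3 := by positivity
    set b : ℝ := u x with hb
    set c : ℝ := u (σ x) with hc
    clear_value a b c
    have hb0 : 0 ≤ b := hb ▸ hpos x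
    have hc0 : 0 ≤ c := hc ▸ hpos (σ x)
    rcases lt_trichotomy a 0 with hlt | heq | hgt
    · rw [hpx, if_neg (not_le.mpr hlt), hpσ, if_pos (by linarith)]
      have har : a / ‖x‖ ^ 3 ≤ 0 := div_nonpos_of_nonpos_of_nonneg hlt.le hr0
      rcases le_total b c with h | h
      · rw [min_eq_left h, max_eq_left h]
        have h2' : (b:ℝ) ^ 2 - c ^ 2 - (b ^ 2 - c ^ 2) ≤ 0 := by nlinarith
        nlinarith [mul_nonneg (neg_nonneg.2 har) (neg_nonneg.2 h2')]
      · rw [min_eq_right h, max_eq_right h]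
        have h2' : (c:ℝ) ^ 2 - b ^ 2 - (b ^ 2 - c ^ 2) ≤ 0 := by nlinarith
        nlinarith [mul_nonneg (neg_nonneg.2 har) (neg_nonneg.2 h2')]
    · rw [heq, zero_div, zero_mul]
    · rw [hpx, if_pos hgt.le, hpσ, if_neg (by simpa using hgt)]
      have har : 0 ≤ a / ‖x‖ ^ 3 := div_nonneg hgt.le hr0
      rcases le_total b c with h | h
      · rw [max_eq_right h, min_eq_right h]
        have : (0:ℝ) ≤ c ^ 2 - b ^ 2 - (b ^ 2 - c ^ 2) := by nlinarith
        exact mul_nonneg har this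
      · rw [max_eq_left h, min_eq_left h]
        have : (0:ℝ) ≤ b ^ 2 - c ^ 2 - (b ^ 2 - c ^ 2) := by nlinarith
        exact mul_nonneg har this
  have hfi : Integrable f := by
    have h12 := h1.sub h2
    refine h12.congr ?_
    filter_upwards with x
    simp only [hf, Pi.sub_apply]
    ring
  have hmp : MeasurePreserving σ (volume : Measure (EuclideanSpace ℝ (Fin N)))
      (volume : Measure (EuclideanSpace ℝ (Fin N))) := σ.measurePreserving
  have hemb : MeasurableEmbedding σ := σ.toHomeomorph.measurableEmbedding
  have hfi' : Integrable (fun x => f (σ x)) := (hmp.integrable_comp_emb hemb).mpr hfi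
  have hint : ∫ x, f (σ x) = ∫ x, f x := hmp.integral_comp hemb f
  have h0 : 0 ≤ ∫ x, (f x + f (σ x)) := integral_nonneg key
  rw [integral_add hfi hfi', hint] at h0
  have hfin : 0 ≤ ∫ x, f x := by linarith
  exact hfin
end
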